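/- arXiv:1207.1029 — 2 statements merged into one kernel-verified Lean document; each statement's English description precedes it below -/
import Mathlib

section
/- Let Σ be a k×k symmetric positive definite matrix, μ ∈ ℝ^k, μ̃ = 𝟏 + μ, A = Σ + μ̃μ̃', R_GMV = (𝟏'Σ⁻¹μ)/(𝟏'Σ⁻¹𝟏), s = μ'Qμ, Q = Σ⁻¹ - (Σ⁻¹𝟏𝟏'Σ⁻¹)/(𝟏'Σ⁻¹𝟏). Then for any α̃ > 0, the vector w = A⁻¹𝟏/(𝟏'A⁻¹𝟏) + α̃⁻¹(A⁻¹ - (A⁻¹𝟏𝟏'A⁻¹)/(𝟏'A⁻¹𝟏))μ̃ satisfies w = Σ⁻¹𝟏/(𝟏'Σ⁻¹𝟏) + ((α̃⁻¹ - 1 - R_GMV)/(1 + s)) Qμ. -/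
open Matrix

private lemma vmv_mulVec {k : ℕ} (a b x : Fin k → ℝ) :
    vecMulVec a b *ᵥ x = (b ⬝ᵥ x) • a := by
  funext i
  simp [mulVec, vecMulVec_apply, dotProduct, Finset.mul_sum, mul_comm, mul_assoc, mul_left_comm]

theorem stmt10 {k : ℕ} (S : Matrix (Fin k) (Fin k) ℝ) (hS : S.PosDef)
    (one : Fin k → ℝ) (hone : one = fun _ => (1:ℝ))
    (μ : Fin k → ℝ) (A : Matrix (Fin k) (Fin k) ℝ)
    (hA : A = S + vecMulVec (one + μ) (one + μ))
    (Q : Matrix (Fin k) (Fin k) ℝ)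
    (hQ : Q = S⁻¹ - (one ⬝ᵥ S⁻¹ *ᵥ one)⁻¹ • vecMulVec (S⁻¹ *ᵥ one) (one ᵥ* S⁻¹))
    (R s : ℝ) (hR : R = (one ⬝ᵥ S⁻¹ *ᵥ μ) / (one ⬝ᵥ S⁻¹ *ᵥ one))
    (hs : s = μ ⬝ᵥ Q *ᵥ μ)
    (α : ℝ) (hα : 0 < α)
    (w : Fin k → ℝ)
    (hw : w = (one ⬝ᵥ A⁻¹ *ᵥ one)⁻¹ • (A⁻¹ *ᵥ one)
        + α⁻¹ • ((A⁻¹ - (one ⬝ᵥ A⁻¹ *ᵥ one)⁻¹ • vecMulVec (A⁻¹ *ᵥ one) (one ᵥ* A⁻¹)) *ᵥ (one + μ))) :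
    w = (one ⬝ᵥ S⁻¹ *ᵥ one)⁻¹ • (S⁻¹ *ᵥ one) + ((α⁻¹ - 1 - R) / (1 + s)) • (Q *ᵥ μ) := by
  rcases Nat.eq_zero_or_pos k with hk | hk
  · subst hk; funext i; exact i.elim0
  have h1 : one ≠ 0 := by
    subst hone
    intro h
    have := congrFun h ⟨0, hk⟩
    simp at this
  -- basic facts about S⁻¹
  have hSiT : (S⁻¹)ᵀ = S⁻¹ := by
    have := hS.inv.isHermitian
    rwa [IsHermitian, conjTranspose_eq_transpose_of_trivial] at this
  have hdotsym : ∀ x y : Fin k → ℝ, x ⬝ᵥ S⁻¹ *ᵥ y = y ⬝ᵥ S⁻¹ *ᵥ x := by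
    intro x y
    rw [dotProduct_mulVec, ← mulVec_transpose, hSiT, dotProduct_comm]
  have hposS : ∀ x : Fin k → ℝ, x ≠ 0 → 0 < x ⬝ᵥ S⁻¹ *ᵥ x := by
    intro x hx
    have := hS.inv.dotProduct_mulVec_pos hx; simpa using this
  have hnnS : ∀ x : Fin k → ℝ, 0 ≤ x ⬝ᵥ S⁻¹ *ᵥ x := by
    intro x
    by_cases hx : x = 0
    · simp [hx]
    · exact (hposS x hx).le
  have hSd : IsUnit S.det := (Matrix.isUnit_iff_isUnit_det S).1 hS.isUnit
  have hSmul : ∀ x : Fin k → ℝ, S *ᵥ (S⁻¹ *ᵥ x) = x := by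
    intro x
    rw [mulVec_mulVec, mul_nonsing_inv _ hSd, one_mulVec]
  set v1 := S⁻¹ *ᵥ one with hv1
  set vμ := S⁻¹ *ᵥ μ with hvμ
  set a := one ⬝ᵥ v1 with ha'
  set b := one ⬝ᵥ vμ with hb'
  set d := μ ⬝ᵥ vμ with hd'
  clear_value v1 vμ a b d
  have h11 : one ⬝ᵥ v1 = a := ha'.symm
  have h1μ : one ⬝ᵥ vμ = b := hb'.symm
  have hμ1 : μ ⬝ᵥ v1 = b := by rw [hb', hvμ, hv1]; exact hdotsym μ one
  have hμμ : μ ⬝ᵥ vμ = d := hd'.symm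
  have h11' : v1 ⬝ᵥ one = a := by rw [dotProduct_comm]; exact h11
  have h1μ' : vμ ⬝ᵥ one = b := by rw [dotProduct_comm]; exact h1μ
  have hμ1' : v1 ⬝ᵥ μ = b := by rw [dotProduct_comm]; exact hμ1
  have hμμ' : vμ ⬝ᵥ μ = d := by rw [dotProduct_comm]; exact hμμ
  have hSv1 : S *ᵥ v1 = one := by rw [hv1]; exact hSmul one
  have hSvμ : S *ᵥ vμ = μ := by rw [hvμ]; exact hSmul μ
  have hapos : 0 < a := by rw [ha', hv1]; exact hposS one h1
  have hane : a ≠ 0 := hapos.ne'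
  -- Cauchy-Schwarz: 0 ≤ a*d - b*b
  have hcs : 0 ≤ a * d - b * b := by
    have key := hnnS (a • μ - b • one)
    simp only [mulVec_sub, mulVec_smul, dotProduct_sub, sub_dotProduct, dotProduct_smul,
      smul_dotProduct, smul_eq_mul, ← hv1, ← hvμ, h11, h1μ, hμ1, hμμ] at key
    nlinarith [key, hapos]
  set c := 1 + (a + 2*b + d) with hc'
  clear_value c
  have huu : (one + μ) ⬝ᵥ S⁻¹ *ᵥ (one + μ) = a + 2*b + d := by
    simp only [mulVec_add, dotProduct_add, add_dotProduct, ← hv1, ← hvμ, h11, h1μ, hμ1, hμμ]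
    ring
  have hcpos : 0 < c := by
    have := hnnS (one + μ)
    rw [huu] at this
    rw [hc']; linarith
  have hcne : c ≠ 0 := hcpos.ne'
  have hNpos : 0 < a + (a * d - b * b) := by linarith
  have hNne : a + (a * d - b * b) ≠ 0 := hNpos.ne'
  -- A is positive definite
  have hvv : (vecMulVec (one + μ) (one + μ)).PosSemidef := by
    rw [posSemidef_iff_dotProduct_mulVec]
    constructor
    · ext i j; simp [conjTranspose_apply, vecMulVec_apply, mul_comm]
    · intro x
      rw [vmv_mulVec]
      simp only [star_trivial, dotProduct_smul, smul_eq_mul]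
      rw [dotProduct_comm]
      exact mul_self_nonneg _
  have hApd : A.PosDef := by rw [hA]; exact hS.add_posSemidef hvv
  have hAd : IsUnit A.det := (Matrix.isUnit_iff_isUnit_det A).1 hApd.isUnit
  have hAinvmul : ∀ x : Fin k → ℝ, A⁻¹ *ᵥ (A *ᵥ x) = x := by
    intro x
    rw [mulVec_mulVec, nonsing_inv_mul _ hAd, one_mulVec]
  have hAiT : (A⁻¹)ᵀ = A⁻¹ := by
    have hAT : Aᵀ = A := by
      have := hApd.isHermitian
      rwa [IsHermitian, conjTranspose_eq_transpose_of_trivial] at this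
    rw [transpose_nonsing_inv, hAT]
  have hvm : one ᵥ* A⁻¹ = A⁻¹ *ᵥ one := by rw [← mulVec_transpose, hAiT]
  -- key mulVec computations
  have hAone : A⁻¹ *ᵥ one = v1 - ((a+b)/c) • (v1 + vμ) := by
    have key : A *ᵥ (v1 - ((a+b)/c) • (v1 + vμ)) = one := by
      rw [hA, add_mulVec, vmv_mulVec]
      simp only [mulVec_sub, mulVec_smul, mulVec_add, hSv1, hSvμ,
        dotProduct_sub, dotProduct_smul, dotProduct_add, add_dotProduct,
        h11, h1μ, hμ1, hμμ, h11', h1μ', hμ1', hμμ', smul_eq_mul]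
      match_scalars <;> field_simp <;> rw [hc'] <;> ring
    rw [← key, hAinvmul]
  have hAu : A⁻¹ *ᵥ (one + μ) = c⁻¹ • (v1 + vμ) := by
    have key : A *ᵥ (c⁻¹ • (v1 + vμ)) = one + μ := by
      rw [hA, add_mulVec, vmv_mulVec]
      simp only [mulVec_smul, mulVec_add, hSv1, hSvμ,
        dotProduct_smul, dotProduct_add, add_dotProduct,
        h11, h1μ, hμ1, hμμ, h11', h1μ', hμ1', hμμ', smul_eq_mul]
      match_scalars <;> field_simp <;> rw [hc'] <;> ring
    rw [← key, hAinvmul]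
  have hg : one ⬝ᵥ A⁻¹ *ᵥ one = (a + (a*d - b*b))/c := by
    rw [hAone]
    simp only [dotProduct_sub, dotProduct_smul, dotProduct_add, h11, h1μ, smul_eq_mul]
    field_simp
    rw [hc']
    ring
  -- Q *ᵥ μ
  have h1S : one ᵥ* S⁻¹ = v1 := by rw [← mulVec_transpose, hSiT, ← hv1]
  have hQμ : Q *ᵥ μ = vμ - (a⁻¹ * b) • v1 := by
    rw [hQ, sub_mulVec, smul_mulVec, vmv_mulVec, h1S, hμ1', smul_smul, ← hvμ]
  have hsval : s = d - a⁻¹ * b * b := by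
    rw [hs, hQμ, dotProduct_sub, dotProduct_smul, hμμ, hμ1, smul_eq_mul]
  have hsA : 1 + s = (a + (a*d - b*b))/a := by rw [hsval]; field_simp
  have h1spos : 0 < 1 + s := by rw [hsA]; exact div_pos hNpos hapos
  have h1sne : 1 + s ≠ 0 := h1spos.ne'
  have hαne : α ≠ 0 := hα.ne'
  -- final assembly
  have hcne' : (1:ℝ) + (a + 2*b + d) ≠ 0 := by rw [← hc']; exact hcne
  have h1sne' : (1:ℝ) + (d - a⁻¹ * b * b) ≠ 0 := by rw [← hsval]; exact h1sne
  have hdotu : (v1 - ((a+b)/c) • (v1 + vμ)) ⬝ᵥ (one + μ) = (a+b)/c := by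
    simp only [sub_dotProduct, smul_dotProduct, add_dotProduct, dotProduct_add,
      h11', h1μ', hμ1', hμμ', smul_eq_mul]
    field_simp
    rw [hc']
    ring
  obtain ⟨B, hB⟩ : ∃ B, B = A⁻¹ := ⟨_, rfl⟩
  rw [← hB] at hw hvm hAone hAu hg
  rw [hw, sub_mulVec, smul_mulVec, vmv_mulVec, hvm, hg, hAone, hAu, hR, hsA, hQμ, hdotu]
  clear hw hB hvm hAone hAu hg hA hQ hs hR hsval hsA hQμ hdotu huu h1S hSv1 hSvμ hSmul hdotsym
    hposS hnnS hSiT hSd hAd hApd hAinvmul hAiT hvv hv1 hvμ ha' hb' hd' hone h1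
  clear h1spos h1sne hS
  clear w A Q S R s
  clear h11 h1μ hμ1 hμμ h11' h1μ' hμ1' hμμ' hα hk hcs hapos hcpos hNpos h1sne' hcne B
  have hNne2 : a + (a * d - b ^ 2) ≠ 0 := by rw [sq]; exact hNne
  have hcne2 : 1 + (a + b * 2 + d) ≠ 0 := by rw [mul_comm b 2]; exact hcne'
  match_scalars <;> rw [hc'] <;> field_simp [hNne2, hcne2] <;> ring
end

section
/- Let Σ be a k×k symmetric positive definite matrix, μ ∈ ℝ^k not proportional to 𝟏, and μ₀ < R_GMV = (𝟏'Σ⁻¹μ)/(𝟏'Σ⁻¹𝟏). Then the solution w_M of the Markowitz problem (minimize w'Σw subject to w'μ = μ₀, w'𝟏 = 1) is not mean-variance efficient: there exists a portfolio w with w'𝟏 = 1, w'Σw = w_M'Σw_M, and w'μ > w_M'μ. -/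
open Matrix

theorem stmt14 {k : ℕ} (S : Matrix (Fin k) (Fin k) ℝ) (hS : S.PosDef)
    (one : Fin k → ℝ) (hone : one = fun _ => (1:ℝ))
    (μ : Fin k → ℝ) (hμ : ¬ ∃ t : ℝ, μ = t • one) (μ0 : ℝ)
    (Rg : ℝ) (hRg : Rg = (one ⬝ᵥ S⁻¹ *ᵥ μ) / (one ⬝ᵥ S⁻¹ *ᵥ one))
    (hμ0 : μ0 < Rg)
    (a b c : ℝ) (ha : a = μ ⬝ᵥ S⁻¹ *ᵥ μ) (hb : b = one ⬝ᵥ S⁻¹ *ᵥ μ)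
    (hc : c = one ⬝ᵥ S⁻¹ *ᵥ one)
    (wM : Fin k → ℝ)
    (hw : wM = ((a - μ0 * b) / (a * c - b ^ 2)) • (S⁻¹ *ᵥ one)
        + ((μ0 * c - b) / (a * c - b ^ 2)) • (S⁻¹ *ᵥ μ)) :
    ∃ w : Fin k → ℝ, w ⬝ᵥ one = 1 ∧ w ⬝ᵥ S *ᵥ w = wM ⬝ᵥ S *ᵥ wM ∧
      wM ⬝ᵥ μ < w ⬝ᵥ μ := by
  -- k is nonzero
  have hk : k ≠ 0 := by
    rintro rfl
    exact hμ ⟨0, funext fun i => i.elim0⟩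
  have hone0 : one ≠ 0 := by
    rw [hone]
    intro h
    have := congrFun h ⟨0, Nat.pos_of_ne_zero hk⟩
    simp at this
  -- symmetry of S⁻¹
  have hsymm : S⁻¹ᵀ = S⁻¹ := by
    rw [Matrix.transpose_nonsing_inv]
    congr 1
    simpa using hS.isHermitian.eq
  have hsym : ∀ u v : Fin k → ℝ, u ⬝ᵥ S⁻¹ *ᵥ v = v ⬝ᵥ S⁻¹ *ᵥ u := by
    intro u v
    rw [Matrix.dotProduct_mulVec, ← Matrix.mulVec_transpose, hsymm, dotProduct_comm]
  have hpos : ∀ x : Fin k → ℝ, x ≠ 0 → 0 < x ⬝ᵥ S⁻¹ *ᵥ x := by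
    intro x hx
    simpa using hS.inv.dotProduct_mulVec_pos hx
  -- S * S⁻¹ = 1
  have hdet : IsUnit S.det := isUnit_iff_ne_zero.mpr (ne_of_gt hS.det_pos)
  have hSx : ∀ v : Fin k → ℝ, S *ᵥ (S⁻¹ *ᵥ v) = v := by
    intro v
    rw [Matrix.mulVec_mulVec, Matrix.mul_nonsing_inv S hdet, Matrix.one_mulVec]
  set x := S⁻¹ *ᵥ one with hx
  set y := S⁻¹ *ᵥ μ with hy
  -- dot product facts
  have h1 : one ⬝ᵥ x = c := hc.symm
  have h2 : one ⬝ᵥ y = b := hb.symm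
  have h3 : μ ⬝ᵥ x = b := by rw [hx, hsym]; exact hb.symm
  have h4 : μ ⬝ᵥ y = a := ha.symm
  have hcpos : 0 < c := by rw [hc]; exact hpos one hone0
  have hc0 : c ≠ 0 := ne_of_gt hcpos
  -- Rg = b / c
  have hRg' : Rg = b / c := by rw [hRg, ← hb, ← hc]
  -- d = a*c - b^2 > 0
  have hz : c • μ - b • one ≠ 0 := by
    intro h
    apply hμ
    refine ⟨b / c, ?_⟩
    have : c • μ = b • one := by
      have := sub_eq_zero.mp h
      exact this
    funext i
    have := congrFun this i
    simp only [Pi.smul_apply, smul_eq_mul] at this ⊢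
    field_simp
    linarith [this]
  have hdpos : 0 < a * c - b ^ 2 := by
    have hq : (c • μ - b • one) ⬝ᵥ S⁻¹ *ᵥ (c • μ - b • one) = c * (a * c - b ^ 2) := by
      rw [Matrix.mulVec_sub, Matrix.mulVec_smul, Matrix.mulVec_smul, ← hx, ← hy]
      simp only [sub_dotProduct, smul_dotProduct, dotProduct_sub, dotProduct_smul,
        smul_eq_mul, h1, h2, h3, h4]
      ring
    have := hpos _ hz
    rw [hq] at this
    nlinarith
  have hd0 : a * c - b ^ 2 ≠ 0 := ne_of_gt hdpos
  set m := 2 * Rg - μ0 with hm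
  refine ⟨((a - m * b) / (a * c - b ^ 2)) • x + ((m * c - b) / (a * c - b ^ 2)) • y,
    ?_, ?_, ?_⟩
  · rw [add_dotProduct, smul_dotProduct, smul_dotProduct, dotProduct_comm x one,
      dotProduct_comm y one, h1, h2, smul_eq_mul, smul_eq_mul]
    field_simp
    ring
  · -- variances
    have key : ∀ t : ℝ,
        (((a - t * b) / (a * c - b ^ 2)) • x + ((t * c - b) / (a * c - b ^ 2)) • y) ⬝ᵥ
          S *ᵥ (((a - t * b) / (a * c - b ^ 2)) • x + ((t * c - b) / (a * c - b ^ 2)) • y)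
        = (a - 2 * t * b + t ^ 2 * c) / (a * c - b ^ 2) := by
      intro t
      rw [Matrix.mulVec_add, Matrix.mulVec_smul, Matrix.mulVec_smul, hx, hy, hSx, hSx, ← hx, ← hy]
      simp only [add_dotProduct, smul_dotProduct, dotProduct_add, dotProduct_smul,
        smul_eq_mul, h1, h2, h3, h4, dotProduct_comm x one, dotProduct_comm y one,
        dotProduct_comm x μ, dotProduct_comm y μ]
      field_simp
      ring
    rw [hw, key, key]
    rw [hm, hRg']
    field_simp
    ring
  · have key2 : ∀ t : ℝ,
        (((a - t * b) / (a * c - b ^ 2)) • x + ((t * c - b) / (a * c - b ^ 2)) • y) ⬝ᵥ μ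
        = t := by
      intro t
      simp only [add_dotProduct, smul_dotProduct, smul_eq_mul,
        dotProduct_comm x μ, dotProduct_comm y μ, h3, h4]
      field_simp
      ring
    rw [hw, key2, key2, hm]
    linarith
end
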